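/- A binary word w is 1-prefix normal if and only if for all 0 ≤ i ≤ j ≤ |w|, P₁(w, j) − P₁(w, i) ≤ P₁(w, j − i). -/

import Mathlib

/-- `w` is 1-prefix normal: no factor of `w` has more 1s than the prefix of the same length. -/
def IsPrefixNormal1 (w : List Bool) : Prop :=
  ∀ v : List Bool, v <:+: w → v.count true ≤ (w.take v.length).count true

/-- Number of 1s in the length-`k` prefix of `w`. -/
def P1 (w : List Bool) (k : ℕ) : ℕ := (w.take k).count true

lemma take_split (w : List Bool) {i j : ℕ} (h : i ≤ j) :
    (w.take j).count true
      = (w.take i).count true + (((w.drop i).take (j - i)).count true) := by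
  conv_lhs => rw [show j = i + (j - i) from (Nat.add_sub_cancel' h).symm]
  rw [List.take_add, List.count_append]

theorem stmt_8 (w : List Bool) :
    IsPrefixNormal1 w ↔
      ∀ i j, i ≤ j → j ≤ w.length → P1 w j - P1 w i ≤ P1 w (j - i) := by
  constructor
  · intro hpn i j hij hjl
    have hinf : (w.drop i).take (j - i) <:+: w :=
      ((w.drop i).take_prefix _).isInfix.trans (w.drop_suffix i).isInfix
    have hlen : ((w.drop i).take (j - i)).length = j - i := by
      simp [List.length_take, List.length_drop]
      omega
    have key := hpn _ hinf
    rw [hlen] at key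
    unfold P1
    rw [take_split w hij]
    omega
  · intro h v hv
    obtain ⟨s, t, rfl⟩ := hv
    have hjl : s.length + v.length ≤ (s ++ v ++ t).length := by simp
    have key := h s.length (s.length + v.length) (Nat.le_add_right _ _) hjl
    unfold P1 at key
    have hji : s.length + v.length - s.length = v.length := by omega
    rw [hji] at key
    have h1 : ((s ++ v ++ t).take (s.length + v.length)).count true
        = s.count true + v.count true := by
      rw [List.take_append_of_le_length (by simp), List.take_of_length_le (by simp),
        List.count_append]
    have h2 : ((s ++ v ++ t).take s.length).count true = s.count true := by
      rw [List.append_assoc, List.take_append_of_le_length (by simp), List.take_length]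
    rw [h1, h2] at key
    omega
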